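/- Let $\overline{f}=\prod_{i=1}^m(x-\alpha_i)^{d_i}$ have degree $d$ and $\overline{g}$ be monic of degree $e>d-1$. Then the $(d-1)$-st subresultant of $\overline{f}$ and $\overline{g}$ equals the Hermite interpolation polynomial of degree $<d$ agreeing with $\overline{g}$ and its derivatives at each $\alpha_i$ up to order $d_i-1$: $\mathrm{Sres}_{d-1}(\overline{f},\overline{g})=\sum_{i=1}^m\sum_{j=0}^{d_i-1}\frac{\overline{g}^{(j)}(\alpha_i)}{j!}\,p_{i,j}$, where $p_{i,j}$ are the basic Hermite polynomials for $((\alpha_1,d_1);\ldots;(\alpha_m,d_m))$. -/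

import Mathlib

open Finset Polynomial

/-- The `t`-th subresultant of `f` and `g` (of formal degrees `d` and `e`), defined as
the determinant of the `(d+e-2t) × (d+e-2t)` Sylvester-type matrix whose first `e-t`
rows contain the coefficients of `f` (shifted), last column `x^{e-t-1-r} f`, and whose
last `d-t` rows contain the coefficients of `g` (shifted), last column `x^{d-t-1-r'} g`. -/
noncomputable def Sres {K : Type*} [CommRing K] (f g : Polynomial K) (d e t : ℕ) :
    Polynomial K :=
  Matrix.det (Matrix.of fun r c : Fin (d + e - 2 * t) =>
    if (r : ℕ) < e - t then
      if (c : ℕ) = d + e - 2 * t - 1 then X ^ (e - t - 1 - (r : ℕ)) * f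
      else if (c : ℕ) ≤ d + (r : ℕ) then Polynomial.C (f.coeff (d + (r : ℕ) - (c : ℕ)))
      else 0
    else
      if (c : ℕ) = d + e - 2 * t - 1 then X ^ (d - t - 1 - ((r : ℕ) - (e - t))) * g
      else if (c : ℕ) ≤ e + ((r : ℕ) - (e - t)) then
        Polynomial.C (g.coeff (e + ((r : ℕ) - (e - t)) - (c : ℕ)))
      else 0)

private lemma det_updateColumn_finset_sum {R n ι : Type*} [CommRing R] [DecidableEq n] [Fintype n]
    (A : Matrix n n R) (j : n) (s : Finset ι) (u : ι → n → R) :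
    Matrix.det (A.updateCol j (fun r => ∑ k ∈ s, u k r)) =
      ∑ k ∈ s, Matrix.det (A.updateCol j (u k)) := by
  classical
  induction s using Finset.induction_on with
  | empty =>
      simp only [Finset.sum_empty]
      exact Matrix.det_eq_zero_of_column_eq_zero j (fun i => by simp)
  | @insert a s ha ih =>
      rw [show (fun r => ∑ k ∈ insert a s, u k r)
            = (u a + fun r => ∑ k ∈ s, u k r) from funext fun r => by
          rw [Finset.sum_insert ha]; rfl]
      rw [Matrix.det_updateCol_add, ih, Finset.sum_insert ha]

private lemma sres_eq_modByMonic {K : Type*} [Field K] (f g : Polynomial K) (d e : ℕ)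
    (hf : f.Monic) (hfd : f.natDegree = d) (hge : g.natDegree ≤ e)
    (hdpos : 0 < d) (hde : d ≤ e) :
    Sres f g d e (d - 1) = g %ₘ f := by
  classical
  set N := e - d + 1 with hN
  have hn : d + e - 2 * (d - 1) = N + 1 := by omega
  set A : Matrix (Fin (N + 1)) (Fin (N + 1)) (Polynomial K) := Matrix.of fun r c =>
    if (r : ℕ) < N then
      (if (c : ℕ) = N then X ^ (N - 1 - (r : ℕ)) * f
       else if (c : ℕ) ≤ d + (r : ℕ) then Polynomial.C (f.coeff (d + (r : ℕ) - (c : ℕ)))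
       else 0)
    else (if (c : ℕ) = N then g else Polynomial.C (g.coeff (e - (c : ℕ)))) with hAdef
  -- Step A : `Sres f g d e (d-1)` is the determinant of `A`
  have hA : Sres f g d e (d - 1) = A.det := by
    unfold Sres
    rw [← Matrix.det_reindex_self (finCongr hn)]
    congr 1
    refine Matrix.ext fun r c => ?_
    have h1 : e - (d-1) = N := by omega
    have h2 : d + e - 2*(d-1) - 1 = N := by omega
    have hc : (c : ℕ) ≤ N := Nat.lt_succ_iff.mp c.isLt
    simp only [Matrix.reindex_apply, Matrix.submatrix_apply, Matrix.of_apply, finCongr_symm,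
      finCongr_apply, Fin.coe_cast, hAdef, h1, h2]
    by_cases hr : (r : ℕ) < N
    · simp [hr]
    · have hrN : (r : ℕ) = N := by omega
      have h3 : d - (d-1) - 1 = 0 := by omega
      simp [hr, hrN, h3, hc.trans (by omega : N ≤ e)]
  -- Step B : `f` divides `A.det - g`
  have hdvd : f ∣ A.det - g := by
    rw [Matrix.det_succ_column A (Fin.last N), Fin.sum_univ_castSucc]
    have hminor : (A.submatrix (Fin.last N).succAbove (Fin.last N).succAbove).det = 1 := by
      rw [Matrix.det_of_upperTriangular]
      · refine Finset.prod_eq_one fun i _ => ?_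
        have h1 : ((Fin.last N).succAbove i : ℕ) = (i : ℕ) := by
          rw [Fin.succAbove_last]; rfl
        simp only [Matrix.submatrix_apply, hAdef, Matrix.of_apply, h1]
        have : (i : ℕ) < N := i.isLt
        simp only [this, if_pos, if_neg (by omega : ¬ (i:ℕ) = N),
          if_pos (by omega : (i:ℕ) ≤ d + (i:ℕ))]
        have : d + (i : ℕ) - (i : ℕ) = d := by omega
        rw [this, ← hfd, hf.coeff_natDegree, map_one]
      · intro i j hij
        simp only [id_eq] at hij
        have h1 : ((Fin.last N).succAbove i : ℕ) = (i : ℕ) := by rw [Fin.succAbove_last]; rfl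
        have h2 : ((Fin.last N).succAbove j : ℕ) = (j : ℕ) := by rw [Fin.succAbove_last]; rfl
        have hji : (j : ℕ) < (i : ℕ) := hij
        simp only [Matrix.submatrix_apply, hAdef, Matrix.of_apply, h1, h2]
        have hiN : (i : ℕ) < N := i.isLt
        simp only [hiN, if_pos, if_neg (by omega : ¬ (j:ℕ) = N),
          if_pos (by omega : (j:ℕ) ≤ d + (i:ℕ))]
        rw [coeff_eq_zero_of_natDegree_lt (by omega : f.natDegree < d + (i:ℕ) - (j:ℕ)), map_zero]
    have hlast : A (Fin.last N) (Fin.last N) = g := by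
      simp [hAdef]
    have hsign : ((-1 : Polynomial K) ^ ((Fin.last N : ℕ) + (Fin.last N : ℕ))) = 1 :=
      Even.neg_one_pow ⟨N, rfl⟩
    rw [hminor, hlast, hsign, one_mul, mul_one, add_sub_cancel_right]
    refine Finset.dvd_sum fun i _ => ?_
    have hcol : A i.castSucc (Fin.last N) = X ^ (N - 1 - (i:ℕ)) * f := by
      have : ((i.castSucc : Fin (N+1)) : ℕ) = (i : ℕ) := rfl
      simp [hAdef, this, i.isLt]
    rw [hcol]
    exact dvd_mul_of_dvd_left ((dvd_mul_left f _).mul_left _) _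
  -- Step C : `A.det` has degree `< d`
  have hdeg : A.det.degree < (d : ℕ) := by
    have hcoldeg : ∀ r : Fin (N+1), (A r (Fin.last N)).natDegree ≤ e := by
      intro r
      by_cases hr : (r : ℕ) < N
      · have : A r (Fin.last N) = X ^ (N - 1 - (r:ℕ)) * f := by simp [hAdef, hr]
        rw [this]
        refine (natDegree_mul_le).trans ?_
        rw [natDegree_X_pow, hfd]
        omega
      · have : A r (Fin.last N) = g := by simp [hAdef, hr]
        rw [this]; exact hge
    have hdecomp : A.det = ∑ k ∈ range (e+1),
        (X : Polynomial K) ^ k *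
          (A.updateCol (Fin.last N)
            (fun r => Polynomial.C ((A r (Fin.last N)).coeff k))).det := by
      conv_lhs => rw [← Matrix.updateCol_eq_self A (Fin.last N)]
      rw [show (fun i => A i (Fin.last N))
            = (fun r => ∑ k ∈ range (e+1),
                ((X : Polynomial K) ^ k •
                  fun r' : Fin (N+1) => Polynomial.C ((A r' (Fin.last N)).coeff k)) r) from
          funext fun r => by
            simp only [Pi.smul_apply, smul_eq_mul]
            conv_lhs => rw [as_sum_range' _ (e+1) (Nat.lt_succ_of_le (hcoldeg r))]
            exact Finset.sum_congr rfl fun k _ => by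
              rw [← C_mul_X_pow_eq_monomial, mul_comm]]
      rw [det_updateColumn_finset_sum]
      exact Finset.sum_congr rfl fun k _ => Matrix.det_updateCol_smul _ _ _ _
    rw [hdecomp]
    refine lt_of_le_of_lt (degree_sum_le _ _) ((Finset.sup_lt_iff (WithBot.bot_lt_coe d)).2 ?_)
    intro k hk
    have hke : k ≤ e := by simpa [Nat.lt_succ_iff] using hk
    set B := A.updateCol (Fin.last N) (fun r => Polynomial.C ((A r (Fin.last N)).coeff k))
      with hB
    by_cases hkd : k < d
    · have hBc : ∀ r c, ∃ x : K, B r c = Polynomial.C x := by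
        intro r c
        by_cases hc : c = Fin.last N
        · exact ⟨_, by rw [hB, hc, Matrix.updateCol_self]⟩
        · rw [hB, Matrix.updateCol_ne hc]
          have hcN : ¬ (c : ℕ) = N := fun h => hc (Fin.ext h)
          by_cases hr : (r : ℕ) < N
          · by_cases h2 : (c : ℕ) ≤ d + (r : ℕ)
            · exact ⟨f.coeff (d + (r:ℕ) - (c:ℕ)), by simp [hAdef, hr, hcN, h2]⟩
            · exact ⟨0, by simp [hAdef, hr, hcN, h2]⟩
          · exact ⟨g.coeff (e - (c:ℕ)), by simp [hAdef, hr, hcN]⟩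
      choose B' hB' using hBc
      have hBmap : B = (Matrix.of B').map (Polynomial.C) := by
        refine Matrix.ext fun r c => ?_
        rw [Matrix.map_apply, Matrix.of_apply, hB' r c]
      rw [hBmap, ← RingHom.mapMatrix_apply, ← RingHom.map_det]
      refine (degree_mul_le _ _).trans_lt ?_
      have h1 : degree ((X : Polynomial K) ^ k) = (k : ℕ) := degree_X_pow k
      calc degree ((X:Polynomial K)^k) + degree (Polynomial.C ((Matrix.of B').det))
          ≤ (k : ℕ) + 0 := add_le_add h1.le degree_C_le
        _ = (k : ℕ) := by rw [add_zero]
        _ < (d : ℕ) := by exact_mod_cast WithBot.coe_lt_coe.2 hkd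
    · have hkd' : d ≤ k := le_of_not_gt hkd
      have hcd : e - k < N := by omega
      set c' : Fin (N+1) := ⟨e - k, by omega⟩ with hc'
      have hcc : (c' : ℕ) = e - k := rfl
      have hne : c' ≠ Fin.last N := by
        intro h
        have h3 : (c' : ℕ) = N := by rw [h]; rfl
        rw [hcc] at h3
        omega
      have hdup : ∀ r, B r c' = B r (Fin.last N) := by
        intro r
        rw [hB, Matrix.updateCol_ne hne, Matrix.updateCol_self]
        by_cases hr : (r : ℕ) < N
        · have hAc : A r c' = if (e - k : ℕ) ≤ d + (r:ℕ)
              then Polynomial.C (f.coeff (d + (r:ℕ) - (e - k))) else 0 := by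
            rw [hAdef]
            simp only [Matrix.of_apply, hcc, if_pos hr,
              if_neg (show ¬ (e - k) = N by omega)]
          have hAl : A r (Fin.last N) = X ^ (N - 1 - (r:ℕ)) * f := by simp [hAdef, hr]
          rw [hAc, hAl, X_pow_mul, coeff_mul_X_pow']
          by_cases h2 : (e - k : ℕ) ≤ d + (r : ℕ)
          · rw [if_pos h2, if_pos (show N - 1 - (r:ℕ) ≤ k by omega)]
            congr 2
            omega
          · rw [if_neg h2, if_neg (show ¬ N - 1 - (r:ℕ) ≤ k by omega), map_zero]
        · have hAc : A r c' = Polynomial.C (g.coeff (e - (e - k))) := by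
            rw [hAdef]
            simp only [Matrix.of_apply, hcc, if_neg hr,
              if_neg (show ¬ (e - k) = N by omega)]
          have hAl : A r (Fin.last N) = g := by simp [hAdef, hr]
          rw [hAc, hAl, (show e - (e - k) = k by omega)]
      rw [Matrix.det_zero_of_column_eq hne hdup, mul_zero, degree_zero]
      exact WithBot.bot_lt_coe d
  -- Step D : conclusion
  have hfne : f ≠ 0 := hf.ne_zero
  have hdegf : f.degree = (d : ℕ) := by rw [degree_eq_natDegree hfne, hfd]
  have h2 : f ∣ A.det - g %ₘ f := by
    have h3 : A.det - g %ₘ f = (A.det - g) + f * (g /ₘ f) := by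
      rw [modByMonic_eq_sub_mul_div g f]; ring
    rw [h3]
    exact dvd_add hdvd (Dvd.intro _ rfl)
  have h4 : (A.det - g %ₘ f).degree < f.degree :=
    lt_of_le_of_lt (degree_sub_le _ _)
      (max_lt (by rw [hdegf]; exact hdeg) (degree_modByMonic_lt g hf))
  have h5 := Polynomial.eq_zero_of_dvd_of_degree_lt h2 h4
  rw [hA]
  exact sub_eq_zero.mp h5

/-- `Sres_{d-1}(f̄, ḡ)` is the Hermite interpolation polynomial of degree `< d`
agreeing with `ḡ` and its derivatives at each `αᵢ` up to order `dᵢ - 1`: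
`Sres_{d-1}(f̄, ḡ) = ∑ᵢ ∑_{j<dᵢ} (ḡ^{(j)}(αᵢ)/j!) p_{i,j}`. -/
theorem sres_dsub1 {K : Type*} [Field K] [CharZero K] {m : ℕ}
    (α : Fin m → K) (hα : Function.Injective α) (dd : Fin m → ℕ) (hdd : ∀ i, 1 ≤ dd i)
    (d e : ℕ) (hd : d = ∑ i, dd i) (hdpos : 0 < d) (hde : d - 1 < e)
    (g : Polynomial K) (hg : g.Monic) (hge : g.natDegree = e)
    (p : (i : Fin m) → ℕ → Polynomial K)
    (hpdeg : ∀ (i : Fin m) (j : ℕ), j < dd i → (p i j).degree < (d : ℕ))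
    (hpcond : ∀ (i : Fin m) (j : ℕ), j < dd i → ∀ (ℓ : Fin m) (q : ℕ), q < dd ℓ →
      Polynomial.eval (α ℓ) (Polynomial.derivative^[q] (p i j)) =
        if ℓ = i ∧ q = j then (j.factorial : K) else 0) :
    Sres (∏ i, (X - Polynomial.C (α i)) ^ (dd i)) g d e (d - 1) =
      ∑ i, ∑ j ∈ Finset.range (dd i),
        Polynomial.C (Polynomial.eval (α i) (Polynomial.derivative^[j] g) / (j.factorial : K)) *
          p i j := by
  classical
  set f : Polynomial K := ∏ i, (X - Polynomial.C (α i)) ^ (dd i) with hfdef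
  set H : Polynomial K := ∑ i, ∑ j ∈ Finset.range (dd i),
    Polynomial.C (Polynomial.eval (α i) (Polynomial.derivative^[j] g) / (j.factorial : K)) *
      p i j with hHdef
  have hf : f.Monic := monic_prod_of_monic _ _ fun i _ => (monic_X_sub_C _).pow _
  have hfd : f.natDegree = d := by
    rw [hfdef, natDegree_prod _ _ (fun i _ => pow_ne_zero _ (X_sub_C_ne_zero _)), hd]
    exact Finset.sum_congr rfl fun i _ => by rw [natDegree_pow, natDegree_X_sub_C, mul_one]
  have hde' : d ≤ e := by omega
  rw [sres_eq_modByMonic f g d e hf hfd hge.le hdpos hde']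
  -- it remains to show `g %ₘ f = H`
  have hfactne : ∀ j : ℕ, ((j.factorial : K)) ≠ 0 := fun j =>
    Nat.cast_ne_zero.mpr (Nat.factorial_ne_zero j)
  -- H has the same derivatives as g at the interpolation points
  have hHder : ∀ (ℓ : Fin m) (q : ℕ), q < dd ℓ →
      Polynomial.eval (α ℓ) (Polynomial.derivative^[q] H) =
        Polynomial.eval (α ℓ) (Polynomial.derivative^[q] g) := by
    intro ℓ q hq
    rw [hHdef, Polynomial.iterate_derivative_sum]
    rw [Polynomial.eval_finset_sum]
    rw [Finset.sum_eq_single ℓ]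
    · rw [Polynomial.iterate_derivative_sum, Polynomial.eval_finset_sum]
      rw [Finset.sum_eq_single q]
      · rw [Polynomial.iterate_derivative_C_mul, Polynomial.eval_mul, Polynomial.eval_C,
          hpcond ℓ q hq ℓ q hq, if_pos ⟨rfl, rfl⟩, div_mul_cancel₀ _ (hfactne q)]
      · intro j hj hjq
        rw [Polynomial.iterate_derivative_C_mul, Polynomial.eval_mul, Polynomial.eval_C,
          hpcond ℓ j (Finset.mem_range.mp hj) ℓ q hq,
          if_neg (fun h => hjq h.2.symm), mul_zero]
      · intro h
        exact absurd (Finset.mem_range.mpr hq) h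
    · intro i _ hiℓ
      rw [Polynomial.iterate_derivative_sum, Polynomial.eval_finset_sum]
      refine Finset.sum_eq_zero fun j hj => ?_
      rw [Polynomial.iterate_derivative_C_mul, Polynomial.eval_mul, Polynomial.eval_C,
        hpcond i j (Finset.mem_range.mp hj) ℓ q hq,
        if_neg (fun h => hiℓ h.1.symm), mul_zero]
    · intro h
      exact absurd (Finset.mem_univ ℓ) h
  -- f divides g - H
  have hdvd : f ∣ g - H := by
    by_cases hgH : g - H = 0
    · rw [hgH]; exact dvd_zero f
    refine Finset.prod_dvd_of_coprime ?_ (fun ℓ _ => ?_)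
    · intro i _ j _ hij
      exact ((Polynomial.pairwise_coprime_X_sub_C hα hij).pow)
    · have hroot : ∀ q ≤ dd ℓ - 1, (Polynomial.derivative^[q] (g - H)).IsRoot (α ℓ) := by
        intro q hq
        have hq' : q < dd ℓ := by have := hdd ℓ; omega
        rw [Polynomial.IsRoot, Polynomial.iterate_derivative_sub, Polynomial.eval_sub,
          hHder ℓ q hq', sub_self]
      have hlt : dd ℓ - 1 < (g - H).rootMultiplicity (α ℓ) :=
        Polynomial.lt_rootMultiplicity_of_isRoot_iterate_derivative_of_mem_nonZeroDivisors
          hgH hroot (mem_nonZeroDivisors_of_ne_zero (hfactne _))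
      have hle : dd ℓ ≤ (g - H).rootMultiplicity (α ℓ) := by have := hdd ℓ; omega
      exact (pow_dvd_pow _ hle).trans ((g - H).pow_rootMultiplicity_dvd (α ℓ))
  -- degree of H is < d
  have hHdeg : H.degree < (d : ℕ) := by
    rw [hHdef]
    refine lt_of_le_of_lt (degree_sum_le _ _)
      ((Finset.sup_lt_iff (WithBot.bot_lt_coe d)).2 fun i _ => ?_)
    refine lt_of_le_of_lt (degree_sum_le _ _)
      ((Finset.sup_lt_iff (WithBot.bot_lt_coe d)).2 fun j hj => ?_)
    refine lt_of_le_of_lt (degree_mul_le _ _) ?_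
    refine lt_of_le_of_lt (add_le_add degree_C_le le_rfl) ?_
    rw [zero_add]
    exact hpdeg i j (Finset.mem_range.mp hj)
  -- conclude
  have hfne : f ≠ 0 := hf.ne_zero
  have hdegf : f.degree = (d : ℕ) := by rw [degree_eq_natDegree hfne, hfd]
  have h2 : f ∣ (g %ₘ f) - H := by
    have h3 : (g %ₘ f) - H = (g - H) - f * (g /ₘ f) := by
      rw [modByMonic_eq_sub_mul_div g f]; ring
    rw [h3]
    exact dvd_sub hdvd (Dvd.intro _ rfl)
  have h4 : ((g %ₘ f) - H).degree < f.degree :=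
    lt_of_le_of_lt (degree_sub_le _ _)
      (max_lt (degree_modByMonic_lt g hf) (by rw [hdegf]; exact hHdeg))
  have h5 := Polynomial.eq_zero_of_dvd_of_degree_lt h2 h4
  exact sub_eq_zero.mp h5
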